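/- For all natural numbers p, q, n, the sum over k from 0 to n of C(p+n, k)·C(q+n, n-k)·H_{p+n-k}·H_{q+k} equals C(p+q+2n, n)·[(H^{(2)}_{p+q+n} - H^{(2)}_{p+q+2n}) + (H_{p+n} + H_{p+q+n} - H_{p+q+2n})·(H_{q+n} + H_{p+q+n} - H_{p+q+2n})]. -/

import Mathlib

open Finset BigOperators

def H (n : ℕ) : ℚ := ∑ i ∈ Finset.range n, 1 / (i + 1 : ℚ)

def H2 (n : ℕ) : ℚ := ∑ i ∈ Finset.range n, 1 / ((i + 1 : ℚ))^2

open Polynomial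

noncomputable def BP (a k : ℕ) : Polynomial ℚ :=
  ∏ j ∈ Finset.range k, (X + C ((a : ℚ) - j))

lemma BP_ne (a k : ℕ) (m : ℕ) (hk : k ≤ a) :
    ∀ j ∈ Finset.range k, (m : ℚ) + ((a : ℚ) - j) ≠ 0 := by
  intro j hj
  rw [Finset.mem_range] at hj
  have hja : (j : ℚ) < a := by exact_mod_cast lt_of_lt_of_le hj hk
  have : (0:ℚ) ≤ (m:ℚ) := Nat.cast_nonneg m
  intro hcon; linarith

lemma BP_eval (a k m : ℕ) (hk : k ≤ m + a) :
    (BP a k).eval (m:ℚ) = (Nat.factorial k : ℚ) * ((m + a).choose k : ℚ) := by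
  have : (BP a k).eval (m:ℚ) = ∏ j ∈ Finset.range k, ((m : ℚ) + ((a:ℚ) - j)) := by
    simp [BP, eval_prod]
  rw [this]
  have h2 : ∏ j ∈ Finset.range k, ((m : ℚ) + ((a:ℚ) - j))
      = (((m+a).descFactorial k : ℕ) : ℚ) := by
    rw [Nat.descFactorial_eq_prod_range, Nat.cast_prod]
    refine Finset.prod_congr rfl fun j hj => ?_
    rw [Finset.mem_range] at hj
    have : j ≤ m + a := le_trans (le_of_lt hj) hk
    rw [Nat.cast_sub this]
    push_cast; ring
  rw [h2, Nat.descFactorial_eq_factorial_mul_choose]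
  push_cast; ring

lemma Hsum (a k m : ℕ) (hk : k ≤ m + a) :
    ∑ j ∈ Finset.range k, 1 / ((m : ℚ) + ((a:ℚ) - j)) = H (m + a) - H (m + a - k) := by
  induction k with
  | zero => simp
  | succ k ih =>
    have hk' : k ≤ m + a := le_trans (Nat.le_succ k) hk
    rw [Finset.sum_range_succ, ih hk']
    have he : m + a - k = (m + a - (k+1)) + 1 := by omega
    have : H (m + a - k) = H (m + a - (k+1)) + 1 / (((m + a - (k+1) : ℕ) : ℚ) + 1) := by
      rw [he, H, Finset.sum_range_succ]; rfl
    rw [this]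
    have hc : ((m + a - (k+1) : ℕ) : ℚ) + 1 = (m : ℚ) + ((a:ℚ) - k) := by
      have h1 : ((m + a - (k+1) : ℕ) : ℚ) = (m:ℚ) + a - (k+1) := by
        rw [Nat.cast_sub hk]; push_cast; ring
      rw [h1]; ring
    rw [hc]; ring

lemma H2sum (a k m : ℕ) (hk : k ≤ m + a) :
    ∑ j ∈ Finset.range k, (1 / ((m : ℚ) + ((a:ℚ) - j)))^2 = H2 (m + a) - H2 (m + a - k) := by
  induction k with
  | zero => simp
  | succ k ih =>
    have hk' : k ≤ m + a := le_trans (Nat.le_succ k) hk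
    rw [Finset.sum_range_succ, ih hk']
    have he : m + a - k = (m + a - (k+1)) + 1 := by omega
    have : H2 (m + a - k) = H2 (m + a - (k+1)) + 1 / (((m + a - (k+1) : ℕ) : ℚ) + 1)^2 := by
      rw [he, H2, Finset.sum_range_succ]; rfl
    have hc : ((m + a - (k+1) : ℕ) : ℚ) + 1 = (m : ℚ) + ((a:ℚ) - k) := by
      have h1 : ((m + a - (k+1) : ℕ) : ℚ) = (m:ℚ) + a - (k+1) := by
        rw [Nat.cast_sub hk]; push_cast; ring
      rw [h1]; ring
    simp only [div_pow, one_pow]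
    rw [this, hc]; ring


lemma evalA {ι : Type*} (s : Finset ι) (c : ι → ℚ) (r : ℚ) (h : ∀ j ∈ s, r + c j ≠ 0) :
    (derivative (∏ j ∈ s, (X + C (c j)))).eval r
      = (∏ j ∈ s, (X + C (c j))).eval r * ∑ j ∈ s, 1 / (r + c j) := by
  classical
  induction s using Finset.induction_on with
  | empty => simp
  | @insert i s hi ih =>
    have hne : r + c i ≠ 0 := h i (mem_insert_self i s)
    have h' : ∀ j ∈ s, r + c j ≠ 0 := fun j hj => h j (mem_insert_of_mem hj)
    rw [Finset.prod_insert hi, Finset.sum_insert hi, derivative_mul]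
    simp only [derivative_add, derivative_X, derivative_C, add_zero, eval_add, eval_mul, eval_X,
      eval_C, eval_one, one_mul, ih h']
    field_simp

lemma evalB {ι : Type*} (s : Finset ι) (c : ι → ℚ) (r : ℚ) (h : ∀ j ∈ s, r + c j ≠ 0) :
    (derivative (derivative (∏ j ∈ s, (X + C (c j))))).eval r
      = (∏ j ∈ s, (X + C (c j))).eval r *
          ((∑ j ∈ s, 1 / (r + c j)) ^ 2 - ∑ j ∈ s, (1 / (r + c j)) ^ 2) := by
  classical
  induction s using Finset.induction_on with
  | empty => simp
  | @insert i s hi ih =>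
    have hne : r + c i ≠ 0 := h i (mem_insert_self i s)
    have h' : ∀ j ∈ s, r + c j ≠ 0 := fun j hj => h j (mem_insert_of_mem hj)
    rw [Finset.prod_insert hi, Finset.sum_insert hi, Finset.sum_insert hi, derivative_mul]
    simp only [derivative_add, derivative_X, derivative_C, add_zero, one_mul, derivative_mul,
      eval_add, eval_mul, eval_X, eval_C, ih h', evalA s c r h']
    field_simp
    ring

lemma BP_deriv_eval (a k m : ℕ) (hk : k ≤ a) :
    (derivative (BP a k)).eval (m:ℚ)
      = (Nat.factorial k : ℚ) * ((m + a).choose k : ℚ) * (H (m + a) - H (m + a - k)) := by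
  have hma : k ≤ m + a := le_trans hk (Nat.le_add_left a m)
  rw [BP, evalA _ _ _ (BP_ne a k m hk), ← BP, BP_eval a k m hma, Hsum a k m hma]

lemma BP_deriv2_eval (a k m : ℕ) (hk : k ≤ a) :
    (derivative (derivative (BP a k))).eval (m:ℚ)
      = (Nat.factorial k : ℚ) * ((m + a).choose k : ℚ) *
          ((H (m + a) - H (m + a - k))^2 - (H2 (m + a) - H2 (m + a - k))) := by
  have hma : k ≤ m + a := le_trans hk (Nat.le_add_left a m)
  rw [BP, evalB _ _ _ (BP_ne a k m hk), ← BP, BP_eval a k m hma, Hsum a k m hma,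
    H2sum a k m hma]

lemma poly_ext {P R : Polynomial ℚ} (h : ∀ m : ℕ, P.eval (m:ℚ) = R.eval (m:ℚ)) : P = R := by
  have hinf : {x : ℚ | (P - R).IsRoot x}.Infinite := by
    apply Set.Infinite.mono ?_ (Set.infinite_range_of_injective
      (Nat.cast_injective : Function.Injective ((↑) : ℕ → ℚ)))
    rintro _ ⟨m, rfl⟩
    simp [Polynomial.IsRoot, h m]
  have := Polynomial.eq_zero_of_infinite_isRoot _ hinf
  linear_combination (norm := ring_nf) this

lemma vander (a b n : ℕ) :
    ∑ k ∈ Finset.range (n+1), (a.choose k : ℚ) * (b.choose (n-k) : ℚ)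
      = ((a+b).choose n : ℚ) := by
  have h : ∑ k ∈ Finset.range (n+1), a.choose k * b.choose (n-k) = (a+b).choose n := by
    rw [Nat.add_choose_eq, Nat.sum_antidiagonal_eq_sum_range_succ_mk]
  calc ∑ k ∈ Finset.range (n+1), (a.choose k : ℚ) * (b.choose (n-k) : ℚ)
      = ((∑ k ∈ Finset.range (n+1), a.choose k * b.choose (n-k) : ℕ) : ℚ) := by push_cast; rfl
    _ = _ := by rw [h]

lemma D2 (p q n : ℕ) :
    ∑ k ∈ Finset.range (n+1), ((p+n).choose k : ℚ) * ((q+n).choose (n-k) : ℚ) *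
        (H (p+n) - H (p+n-k))
      = ((p+q+2*n).choose n : ℚ) * (H (p+q+2*n) - H (p+q+n)) := by
  set P := ∑ k ∈ Finset.range (n+1),
    C (((q+n).choose (n-k) : ℚ) * (Nat.factorial k : ℚ)⁻¹) * BP n k with hP
  set R := C ((Nat.factorial n : ℚ)⁻¹) * BP (q+2*n) n with hR
  have hPR : P = R := by
    apply poly_ext
    intro m
    rw [hP, hR, Polynomial.eval_finset_sum]
    simp only [eval_mul, eval_C]
    have hev : ∀ k ∈ Finset.range (n+1),
        ((q+n).choose (n-k):ℚ) * (Nat.factorial k:ℚ)⁻¹ * (BP n k).eval (m:ℚ)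
          = ((m+n).choose k : ℚ) * ((q+n).choose (n-k):ℚ) := by
      intro k hk
      rw [Finset.mem_range] at hk
      rw [BP_eval n k m (by omega)]
      have := (Nat.cast_ne_zero (R := ℚ)).mpr (Nat.factorial_ne_zero k)
      field_simp
    rw [Finset.sum_congr rfl hev, vander (m+n) (q+n) n,
      BP_eval (q+2*n) n m (by omega), show (m+n)+(q+n) = m+(q+2*n) by omega]
    have := (Nat.cast_ne_zero (R := ℚ)).mpr (Nat.factorial_ne_zero n)
    field_simp
  have hD : (derivative P).eval (p:ℚ) = (derivative R).eval (p:ℚ) := by rw [hPR]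
  have hL : (derivative P).eval (p:ℚ)
      = ∑ k ∈ Finset.range (n+1), ((p+n).choose k : ℚ) * ((q+n).choose (n-k) : ℚ) *
          (H (p+n) - H (p+n-k)) := by
    rw [hP, derivative_sum, Polynomial.eval_finset_sum]
    refine Finset.sum_congr rfl fun k hk => ?_
    rw [Finset.mem_range] at hk
    rw [derivative_C_mul]
    simp only [eval_mul, eval_C]
    rw [BP_deriv_eval n k p (by omega)]
    have := (Nat.cast_ne_zero (R := ℚ)).mpr (Nat.factorial_ne_zero k)
    field_simp
  have hRv : (derivative R).eval (p:ℚ)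
      = ((p+q+2*n).choose n : ℚ) * (H (p+q+2*n) - H (p+q+n)) := by
    rw [hR, derivative_C_mul]
    simp only [eval_mul, eval_C]
    rw [BP_deriv_eval (q+2*n) n p (by omega), show p+(q+2*n) = p+q+2*n by omega,
      show p+q+2*n-n = p+q+n by omega]
    have := (Nat.cast_ne_zero (R := ℚ)).mpr (Nat.factorial_ne_zero n)
    field_simp
  rw [← hL, ← hRv]; exact hD

lemma DD (p q n : ℕ) :
    ∑ k ∈ Finset.range (n+1), ((p+n).choose k : ℚ) * ((q+n).choose (n-k) : ℚ) *
        ((H (p+n) - H (p+n-k)) * (H (q+n) - H (q+k)))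
      = ((p+q+2*n).choose n : ℚ) *
          ((H (p+q+2*n) - H (p+q+n))^2 - (H2 (p+q+2*n) - H2 (p+q+n))) := by
  set Q := ∑ k ∈ Finset.range (n+1),
    C (((p+n).choose k : ℚ) * (H (p+n) - H (p+n-k)) * (Nat.factorial (n-k) : ℚ)⁻¹)
      * BP n (n-k) with hQ
  set G := C ((Nat.factorial n : ℚ)⁻¹) * derivative (BP (p+2*n) n) with hG
  have hQG : Q = G := by
    apply poly_ext
    intro m
    rw [hQ, hG, Polynomial.eval_finset_sum]
    simp only [eval_mul, eval_C]
    have hev : ∀ k ∈ Finset.range (n+1),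
        ((p+n).choose k : ℚ) * (H (p+n) - H (p+n-k)) * (Nat.factorial (n-k) : ℚ)⁻¹
            * (BP n (n-k)).eval (m:ℚ)
          = ((p+n).choose k : ℚ) * ((m+n).choose (n-k) : ℚ) * (H (p+n) - H (p+n-k)) := by
      intro k hk
      rw [Finset.mem_range] at hk
      rw [BP_eval n (n-k) m (by omega)]
      have := (Nat.cast_ne_zero (R := ℚ)).mpr (Nat.factorial_ne_zero (n-k))
      field_simp
    rw [Finset.sum_congr rfl hev, D2 p m n,
      BP_deriv_eval (p+2*n) n m (by omega), show m+(p+2*n) = p+m+2*n by omega,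
      show p+m+2*n-n = p+m+n by omega]
    have := (Nat.cast_ne_zero (R := ℚ)).mpr (Nat.factorial_ne_zero n)
    field_simp
  have hD : (derivative Q).eval (q:ℚ) = (derivative G).eval (q:ℚ) := by rw [hQG]
  have hL : (derivative Q).eval (q:ℚ)
      = ∑ k ∈ Finset.range (n+1), ((p+n).choose k : ℚ) * ((q+n).choose (n-k) : ℚ) *
          ((H (p+n) - H (p+n-k)) * (H (q+n) - H (q+k))) := by
    rw [hQ, derivative_sum, Polynomial.eval_finset_sum]
    refine Finset.sum_congr rfl fun k hk => ?_
    rw [Finset.mem_range] at hk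
    rw [derivative_C_mul]
    simp only [eval_mul, eval_C]
    rw [BP_deriv_eval n (n-k) q (by omega), show q+n-(n-k) = q+k by omega]
    have := (Nat.cast_ne_zero (R := ℚ)).mpr (Nat.factorial_ne_zero (n-k))
    field_simp
  have hRv : (derivative G).eval (q:ℚ)
      = ((p+q+2*n).choose n : ℚ) *
          ((H (p+q+2*n) - H (p+q+n))^2 - (H2 (p+q+2*n) - H2 (p+q+n))) := by
    rw [hG, derivative_C_mul]
    simp only [eval_mul, eval_C]
    rw [BP_deriv2_eval (p+2*n) n q (by omega), show q+(p+2*n) = p+q+2*n by omega,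
      show p+q+2*n-n = p+q+n by omega]
    have := (Nat.cast_ne_zero (R := ℚ)).mpr (Nat.factorial_ne_zero n)
    field_simp
  rw [← hL, ← hRv]; exact hD

theorem stmt13 (p q n : ℕ) :
    ∑ k ∈ Finset.range (n + 1),
        ((p + n).choose k : ℚ) * ((q + n).choose (n - k) : ℚ) * H (p + n - k) * H (q + k)
      = ((p + q + 2 * n).choose n : ℚ)
          * ((H2 (p + q + n) - H2 (p + q + 2 * n))
            + (H (p + n) + H (p + q + n) - H (p + q + 2 * n))
              * (H (q + n) + H (p + q + n) - H (p + q + 2 * n))) := by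
  have Vc := vander (p+n) (q+n) n
  rw [show (p+n)+(q+n) = p+q+2*n by omega] at Vc
  -- hB : (∑ CC)*H(p+n) - ∑ CC*H(p+n-k) = K * D
  have hB := D2 p q n
  simp only [mul_sub, Finset.sum_sub_distrib, ← Finset.sum_mul] at hB
  rw [Vc] at hB
  -- hA : (∑ CC)*H(q+n) - ∑ CC*H(q+k) = K * D
  have h1 := D2 q p n
  have hre := Finset.sum_range_reflect
    (fun j => ((q+n).choose j : ℚ) * ((p+n).choose (n-j) : ℚ) * (H (q+n) - H (q+n-j))) (n+1)
  rw [h1] at hre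
  have hA : ∑ k ∈ Finset.range (n+1),
      ((p+n).choose k : ℚ) * ((q+n).choose (n-k) : ℚ) * (H (q+n) - H (q+k))
        = ((p+q+2*n).choose n : ℚ) * (H (p+q+2*n) - H (p+q+n)) := by
    rw [show p+q+2*n = q+p+2*n by omega, show p+q+n = q+p+n by omega, ← hre]
    refine Finset.sum_congr rfl fun k hk => ?_
    rw [Finset.mem_range] at hk
    simp only [show n+1-1 = n from rfl]
    rw [show n-(n-k) = k by omega, show q+n-(n-k) = q+k by omega]
    ring
  simp only [mul_sub, Finset.sum_sub_distrib, ← Finset.sum_mul] at hA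
  rw [Vc] at hA
  -- expand hDD
  have hDD := DD p q n
  have e : ∀ k ∈ Finset.range (n+1),
      ((p+n).choose k : ℚ) * ((q+n).choose (n-k) : ℚ) *
        ((H (p+n) - H (p+n-k)) * (H (q+n) - H (q+k)))
      = ((p+n).choose k : ℚ) * ((q+n).choose (n-k) : ℚ) * (H (p+n) * H (q+n))
        - ((p+n).choose k : ℚ) * ((q+n).choose (n-k) : ℚ) * H (q+k) * H (p+n)
        - ((p+n).choose k : ℚ) * ((q+n).choose (n-k) : ℚ) * H (p+n-k) * H (q+n)
        + ((p+n).choose k : ℚ) * ((q+n).choose (n-k) : ℚ) * H (p+n-k) * H (q+k) :=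
    fun k _ => by ring
  rw [Finset.sum_congr rfl e] at hDD
  simp only [Finset.sum_add_distrib, Finset.sum_sub_distrib, ← Finset.sum_mul] at hDD
  rw [Vc] at hDD
  linear_combination hDD - H (p+n) * hA - H (q+n) * hB
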